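/- Let k, m ∈ ℝ with k ≠ 0, let a : ℝ → ℝ be differentiable, nonnegative, and nondecreasing, and let χ : ℝ → ℂ be twice differentiable with χ''(η) + (k² + m²·a(η)²)·χ(η) = 0 for all η ∈ ℝ. Set Q(η) := |χ'(η)|² + (k² + m²·a(η)²)·|χ(η)|². Then for all η₁ ≤ η₂: ((k² + m²·a(η₁)²)/(k² + m²·a(η₂)²))·Q(η₂) ≤ Q(η₁) ≤ Q(η₂). (With the normalisation a(η₂) = 1 this is the paper's bound ((k² + a²m²)/(k² + m²))·Q(a=1) ≤ Q(a) ≤ Q(a=1), which implies that the energy density per mode Q/a⁴ scales between a⁻² and a⁻⁴ in an expanding universe.) -/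

import Mathlib

open Complex in
private lemma normSq_hasDerivAt {u : ℝ → ℂ} {u' : ℂ} {t : ℝ} (h : HasDerivAt u u' t) :
    HasDerivAt (fun s => Complex.normSq (u s))
      ((u' * star (u t) + u t * star u').re) t := by
  have h1 : HasDerivAt (fun s => u s * star (u s)) (u' * star (u t) + u t * star u') t :=
    h.mul h.star
  have h2 := Complex.reCLM.hasFDerivAt.comp_hasDerivAt t h1
  have h3 : (Complex.reCLM ∘ fun s => u s * star (u s)) = fun s => Complex.normSq (u s) := by
    funext s
    simp [Function.comp, Complex.mul_conj]
  rwa [h3] at h2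

private lemma deriv_nonneg_of_monotone {a : ℝ → ℝ} (ha : Differentiable ℝ a)
    (hamono : Monotone a) (x : ℝ) : 0 ≤ deriv a x := by
  have h := hasDerivAt_iff_tendsto_slope.mp (ha x).hasDerivAt
  have h' : Filter.Tendsto (slope a x) (nhdsWithin x (Set.Ioi x)) (nhds (deriv a x)) :=
    h.mono_left (nhdsWithin_mono x (fun y hy => ne_of_gt hy))
  refine ge_of_tendsto h' ?_
  filter_upwards [self_mem_nhdsWithin] with y hy
  have hxy : (0:ℝ) < y - x := by simp at hy; linarith
  have : 0 ≤ a y - a x := sub_nonneg.mpr (hamono (le_of_lt (by linarith : x < y)))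
  rw [slope_def_field]
  exact div_nonneg this (le_of_lt hxy)

/-- Two-sided scaling bound for the per-mode energy density: for `η₁ ≤ η₂`,
`((k² + m²a(η₁)²)/(k² + m²a(η₂)²)) Q(η₂) ≤ Q(η₁) ≤ Q(η₂)`. -/
theorem stmt_5 (k m : ℝ) (hk : k ≠ 0) (a : ℝ → ℝ) (χ : ℝ → ℂ)
    (ha : Differentiable ℝ a) (hapos : ∀ t, 0 ≤ a t) (hamono : Monotone a)
    (hχ : Differentiable ℝ χ) (hχ' : Differentiable ℝ (deriv χ))
    (heq : ∀ η : ℝ, deriv (deriv χ) η = -((k ^ 2 + m ^ 2 * a η ^ 2 : ℝ) : ℂ) * χ η) :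
    let Q : ℝ → ℝ := fun η =>
      ‖deriv χ η‖ ^ 2 + (k ^ 2 + m ^ 2 * a η ^ 2) * ‖χ η‖ ^ 2
    ∀ η₁ η₂ : ℝ, η₁ ≤ η₂ →
      ((k ^ 2 + m ^ 2 * a η₁ ^ 2) / (k ^ 2 + m ^ 2 * a η₂ ^ 2)) * Q η₂ ≤ Q η₁ ∧
      Q η₁ ≤ Q η₂ := by
  intro Q η₁ η₂ h12
  set W : ℝ → ℝ := fun η => k ^ 2 + m ^ 2 * a η ^ 2 with hWdef
  have hWpos : ∀ η, 0 < W η := by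
    intro η
    have h1 : 0 < k ^ 2 := by positivity
    have h2 : 0 ≤ m ^ 2 * a η ^ 2 := by positivity
    simp only [hWdef]; linarith
  have hW'nonneg : ∀ η, 0 ≤ 2 * m ^ 2 * a η * deriv a η := by
    intro η
    have := hapos η
    have := deriv_nonneg_of_monotone ha hamono η
    positivity
  have hWd : ∀ η, HasDerivAt W (2 * m ^ 2 * a η * deriv a η) η := by
    intro η
    have h := (((ha η).hasDerivAt.pow 2).const_mul (m ^ 2)).const_add (k ^ 2)
    refine h.congr_deriv ?_
    norm_num
    ring
  -- rewrite Q using normSq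
  have hQeq : Q = fun η => Complex.normSq (deriv χ η) + W η * Complex.normSq (χ η) := by
    funext η
    simp [Q, hWdef, ← Complex.sq_norm]
  -- derivative of Q
  have hQd : ∀ η, HasDerivAt Q (2 * m ^ 2 * a η * deriv a η * Complex.normSq (χ η)) η := by
    intro η
    have hf := normSq_hasDerivAt (hχ' η).hasDerivAt
    have hg := normSq_hasDerivAt (hχ η).hasDerivAt
    have h := hf.add ((hWd η).mul hg)
    rw [hQeq]
    refine h.congr_deriv ?_
    have hkey : (deriv (deriv χ) η * star (deriv χ η) + deriv χ η * star (deriv (deriv χ) η)).re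
        + W η * (deriv χ η * star (χ η) + χ η * star (deriv χ η)).re = 0 := by
      rw [heq η]
      simp only [hWdef, star_mul', star_neg, Complex.star_def, Complex.conj_ofReal,
        Complex.add_re, Complex.neg_re, Complex.mul_re, Complex.mul_im,
        Complex.ofReal_re, Complex.ofReal_im, Complex.conj_re, Complex.conj_im]
      ring
    linarith [hkey]
  have hQdiff : Differentiable ℝ Q := fun η => (hQd η).differentiableAt
  have hQ'eq : ∀ η, deriv Q η = 2 * m ^ 2 * a η * deriv a η * Complex.normSq (χ η) :=
    fun η => (hQd η).deriv
  have hQmono : Monotone Q := by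
    refine monotone_of_deriv_nonneg hQdiff fun η => ?_
    rw [hQ'eq η]
    have := hW'nonneg η
    have := Complex.normSq_nonneg (χ η)
    positivity
  refine ⟨?_, hQmono h12⟩
  -- antitone part: R = Q / W
  set R : ℝ → ℝ := fun η => Q η / W η with hRdef
  have hRd : ∀ η, HasDerivAt R
      ((2 * m ^ 2 * a η * deriv a η * Complex.normSq (χ η) * W η
        - Q η * (2 * m ^ 2 * a η * deriv a η)) / W η ^ 2) η :=
    fun η => (hQd η).div (hWd η) (hWpos η).ne'
  have hRanti : Antitone R := by
    refine antitone_of_deriv_nonpos (fun η => (hRd η).differentiableAt) fun η => ?_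
    rw [(hRd η).deriv]
    apply div_nonpos_of_nonpos_of_nonneg _ (by positivity)
    have hQlow : W η * Complex.normSq (χ η) ≤ Q η := by
      rw [hQeq]; simp only
      have := Complex.normSq_nonneg (deriv χ η)
      linarith
    have h1 := hW'nonneg η
    nlinarith [Complex.normSq_nonneg (χ η), (hWpos η).le]
  have hR := hRanti h12
  simp only [hRdef] at hR
  have hQ2nonneg : 0 ≤ Q η₂ := by
    rw [hQeq]; simp only
    have := Complex.normSq_nonneg (deriv χ η₂)
    have := Complex.normSq_nonneg (χ η₂)
    have := (hWpos η₂).le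
    positivity
  calc W η₁ / W η₂ * Q η₂ = W η₁ * (Q η₂ / W η₂) := by ring
    _ ≤ W η₁ * (Q η₁ / W η₁) := by
        exact mul_le_mul_of_nonneg_left hR (hWpos η₁).le
    _ = Q η₁ := by field_simp [(hWpos η₁).ne']
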